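/- Let f : ℝⁿ → ℝ be convex, differentiable, and λ > 0, α ∈ (0,1). The gradient descent operator F(x) = x - λ∇f(x) is α-averaged if and only if ∇f is co-coercive with constant λ/(2α), i.e., (x-y)ᵀ(∇f(x)-∇f(y)) ≥ (λ/(2α))‖∇f(x)-∇f(y)‖² for all x, y. -/
import Mathlib


open Metric RealInnerProductSpace

lemma aux_norm_iff {n : ℕ} (a b : EuclideanSpace ℝ (Fin n)) (c : ℝ) (hc : 0 < c) :
    ‖a - c • b‖ ≤ ‖a‖ ↔ c / 2 * ‖b‖ ^ 2 ≤ ⟪a, b⟫ := by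
  have expand : ‖a - c • b‖ ^ 2 = ‖a‖ ^ 2 - 2 * (c * ⟪a, b⟫) + c ^ 2 * ‖b‖ ^ 2 := by
    rw [norm_sub_sq_real, real_inner_smul_right, norm_smul, Real.norm_eq_abs,
      abs_of_pos hc]
    ring
  constructor
  · intro h
    have h2 : ‖a - c • b‖ ^ 2 ≤ ‖a‖ ^ 2 := pow_le_pow_left₀ (norm_nonneg _) h 2
    nlinarith
  · intro h
    have h2 : ‖a - c • b‖ ^ 2 ≤ ‖a‖ ^ 2 := by rw [expand]; nlinarith
    nlinarith [norm_nonneg (a - c • b), norm_nonneg a]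

theorem stmt_12 {n : ℕ} (f : EuclideanSpace ℝ (Fin n) → ℝ)
    (hconv : ConvexOn ℝ Set.univ f)
    (f' : EuclideanSpace ℝ (Fin n) → EuclideanSpace ℝ (Fin n))
    (hf' : ∀ x, HasGradientAt f (f' x) x)
    (lam α : ℝ) (hlam : 0 < lam) (hα : α ∈ Set.Ioo (0:ℝ) 1)
    (F : EuclideanSpace ℝ (Fin n) → EuclideanSpace ℝ (Fin n))
    (hF : ∀ x, F x = x - lam • f' x) :
    (∃ N : EuclideanSpace ℝ (Fin n) → EuclideanSpace ℝ (Fin n),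
      (∀ x y, ‖N x - N y‖ ≤ ‖x - y‖) ∧ ∀ x, F x = (1 - α) • x + α • N x) ↔
    (∀ x y, (lam / (2 * α)) * ‖f' x - f' y‖ ^ 2 ≤ ⟪x - y, f' x - f' y⟫) := by
  obtain ⟨hα0, hα1⟩ := hα
  set c := lam / α with hc
  have hc0 : 0 < c := div_pos hlam hα0
  have heq : lam / (2 * α) = c / 2 := by
    rw [hc, div_div, mul_comm]
  constructor
  · rintro ⟨N, hN, hFN⟩ x y
    have hNz : ∀ z, N z = z - c • f' z := by
      intro z
      have h1 : α • N z = α • z - lam • f' z := by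
        have := (hFN z).symm.trans (hF z)
        rw [sub_smul, one_smul] at this
        linear_combination (norm := module) this
      have := congrArg (fun v => α⁻¹ • v) h1
      simp only [smul_smul, inv_mul_cancel₀ hα0.ne', one_smul, smul_sub] at this
      rw [this, hc, div_eq_inv_mul, mul_smul]
    have key := hN x y
    rw [hNz x, hNz y] at key
    have key2 : ‖(x - y) - c • (f' x - f' y)‖ ≤ ‖x - y‖ := by
      have : (x - c • f' x) - (y - c • f' y) = (x - y) - c • (f' x - f' y) := by module
      rwa [this] at key
    rw [heq]
    exact (aux_norm_iff _ _ c hc0).mp key2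
  · intro h
    refine ⟨fun z => z - c • f' z, ?_, ?_⟩
    · intro x y
      have : (x - c • f' x) - (y - c • f' y) = (x - y) - c • (f' x - f' y) := by module
      rw [this]
      exact (aux_norm_iff _ _ c hc0).mpr (heq ▸ h x y)
    · intro x
      rw [hF x]
      rw [hc]
      have : α • (lam / α) • f' x = lam • f' x := by
        rw [smul_smul, mul_div_cancel₀ _ hα0.ne']
      rw [smul_sub, this]; module
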